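/- Let X be a real Banach space and x ∈ S_X. Suppose there exists ε > 0 such that the set {e* ∈ ext(B_{X*}) : |e*(x)| > 1 − ε} of extreme points of the dual unit ball is finite. Then Δc(x) ≤ 1 + sup{ |e*(x)| : e* ∈ ext(B_{X*}), |e*(x)| < 1 }. -/

import Mathlib

set_option maxHeartbeats 1000000

open Set Metric Filter NormedSpace

variable {X : Type*} [NormedAddCommGroup X] [NormedSpace ℝ X]

lemma exists_extreme_norming (z : X) (hz : z ≠ 0) {η : ℝ} (hη : 0 < η) :
    ∃ g ∈ Set.extremePoints ℝ (Metric.closedBall (0 : X →L[ℝ] ℝ) 1), ‖z‖ - η < g z := by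
  obtain ⟨g0, hg0norm, hg0⟩ := exists_dual_vector ℝ z (norm_ne_zero_iff.mpr hz)
  set K : Set (WeakDual ℝ X) := StrongDual.toWeakDual '' Metric.closedBall 0 1 with hK
  have hKeq : K = ⇑(WeakDual.toStrongDual) ⁻¹' Metric.closedBall (0 : StrongDual ℝ X) 1 :=
    StrongDual.toWeakDual.image_eq_preimage_symm _
  haveI : LocallyConvexSpace ℝ (WeakDual ℝ X) := WeakBilin.locallyConvexSpace
  have hKcomp : IsCompact K := hKeq ▸ WeakDual.isCompact_closedBall (𝕜 := ℝ) (E := X) 0 1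
  have hKconv : Convex ℝ K :=
    by
      have := (convex_closedBall (0 : StrongDual ℝ X) 1).linear_image
        (StrongDual.toWeakDual (𝕜 := ℝ) (E := X)).toLinearMap
      exact this
  have hKM := closure_convexHull_extremePoints hKcomp hKconv
  have hmem : (StrongDual.toWeakDual g0) ∈ closure (convexHull ℝ (K.extremePoints ℝ)) := by
    rw [hKM]
    exact ⟨g0, by simpa [mem_closedBall_zero_iff] using hg0norm.le, rfl⟩
  have hopen : IsOpen {p : WeakDual ℝ X | ‖z‖ - η < p z} :=
    isOpen_lt continuous_const (WeakDual.eval_continuous z)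
  have hnbd : {p : WeakDual ℝ X | ‖z‖ - η < p z} ∈ nhds (StrongDual.toWeakDual g0) := by
    refine hopen.mem_nhds ?_
    show ‖z‖ - η < StrongDual.toWeakDual g0 z
    have : StrongDual.toWeakDual g0 z = g0 z := rfl
    rw [this]
    have h2 : g0 z = ‖z‖ := by exact_mod_cast hg0
    rw [h2]; linarith
  obtain ⟨p, hp1, hp2⟩ := mem_closure_iff_nhds.mp hmem _ hnbd
  have hconv : ConvexOn ℝ (Set.univ) (fun p : WeakDual ℝ X => p z) := by
    refine ⟨convex_univ, fun p _ q _ a b _ _ _ => ?_⟩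
    show (a • p + b • q) z ≤ a * p z + b * q z
    exact le_of_eq rfl
  obtain ⟨e, heK, hez⟩ := hconv.exists_ge_of_mem_convexHull (Set.subset_univ _) hp2
  rw [hK, ← image_extremePoints] at heK
  obtain ⟨g, hg, rfl⟩ := heK
  exact ⟨g, hg, lt_of_lt_of_le hp1 hez⟩

/-- The slice `S(f, δ)` of the closed unit ball of `X`, determined by a norm-one functional
`f` and `δ > 0` (the norm and positivity conditions are imposed at use sites). -/
def unitBallSlice (f : X →L[ℝ] ℝ) (δ : ℝ) : Set X :=
  {y | ‖y‖ ≤ 1 ∧ 1 - δ < f y}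

/-- The Daugavet constant of a point: the infimum over all slices of the unit ball of the
supremum of distances from `x` to points of the slice. -/
noncomputable def Dc (x : X) : ℝ :=
  sInf {r | ∃ (f : X →L[ℝ] ℝ) (δ : ℝ), ‖f‖ = 1 ∧ 0 < δ ∧
    r = sSup ((fun y => ‖x - y‖) '' unitBallSlice f δ)}

/-- The Δ-constant of a point: the infimum over all slices of the unit ball containing `x`
of the supremum of distances from `x` to points of the slice. -/
noncomputable def DeltaC (x : X) : ℝ :=
  sInf {r | ∃ (f : X →L[ℝ] ℝ) (δ : ℝ), ‖f‖ = 1 ∧ 0 < δ ∧ x ∈ unitBallSlice f δ ∧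
    r = sSup ((fun y => ‖x - y‖) '' unitBallSlice f δ)}


theorem deltaConstant_le_of_finitely_many_extreme [CompleteSpace X] (x : X) (hx : ‖x‖ = 1)
    (h : ∃ ε > (0 : ℝ),
      {e ∈ Set.extremePoints ℝ (Metric.closedBall (0 : X →L[ℝ] ℝ) 1) | 1 - ε < |e x|}.Finite) :
    DeltaC x ≤ 1 + sSup {r | ∃ e ∈ Set.extremePoints ℝ (Metric.closedBall (0 : X →L[ℝ] ℝ) 1),
      |e x| < 1 ∧ r = |e x|} := by
  classical
  obtain ⟨ε, hε, hfin⟩ := h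
  set EP := Set.extremePoints ℝ (Metric.closedBall (0 : X →L[ℝ] ℝ) 1) with hEP
  set M := sSup {r | ∃ e ∈ EP, |e x| < 1 ∧ r = |e x|} with hM
  have hxne : x ≠ 0 := by
    intro h0; rw [h0, norm_zero] at hx; norm_num at hx
  have hEnorm : ∀ e ∈ EP, ‖e‖ ≤ 1 := fun e he => by
    simpa [mem_closedBall_zero_iff] using he.1
  have hEabs : ∀ e ∈ EP, |e x| ≤ 1 := fun e he => by
    calc |e x| = ‖e x‖ := (Real.norm_eq_abs _).symm
    _ ≤ ‖e‖ * ‖x‖ := e.le_opNorm x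
    _ ≤ 1 := by rw [hx, mul_one]; exact hEnorm e he
  have hM0 : 0 ≤ M := Real.sSup_nonneg (by rintro r ⟨e, he, h1, rfl⟩; exact abs_nonneg _)
  have hMub : ∀ e ∈ EP, |e x| < 1 → |e x| ≤ M := by
    intro e he h1
    refine le_csSup ⟨1, ?_⟩ ⟨e, he, h1, rfl⟩
    rintro r ⟨e', he', h1', rfl⟩; exact h1'.le
  -- there is an extreme point with |e x| = 1
  have hFne : ∃ e ∈ EP, |e x| = 1 := by
    by_contra hcon
    push_neg at hcon
    have hlt : ∀ e ∈ EP, |e x| < 1 := fun e he => lt_of_le_of_ne (hEabs e he) (hcon e he)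
    set S := hfin.toFinset with hS
    rcases S.eq_empty_or_nonempty with hSe | hSne
    · obtain ⟨g, hg, hgz⟩ := exists_extreme_norming x hxne hε
      have hg1 : 1 - ε < |g x| := by
        rw [hx] at hgz; exact lt_of_lt_of_le hgz (le_abs_self _)
      have : g ∈ S := hfin.mem_toFinset.mpr ⟨hg, hg1⟩
      rw [hSe] at this; exact absurd this (Finset.notMem_empty g)
    · set m := S.sup' hSne (fun e => |e x|) with hm
      have hm1 : m < 1 := by
        rw [hm, Finset.sup'_lt_iff]
        intro e heS
        have := hfin.mem_toFinset.mp heS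
        exact hlt e this.1
      set c := max m (1 - ε) with hc
      have hc1 : c < 1 := max_lt hm1 (by linarith)
      obtain ⟨g, hg, hgz⟩ := exists_extreme_norming x hxne (show (0:ℝ) < 1 - c by linarith)
      have hgc : c < g x := by rw [hx] at hgz; linarith
      have hgle : |g x| ≤ c := by
        by_cases hgS : 1 - ε < |g x|
        · have hgmem : g ∈ S := hfin.mem_toFinset.mpr ⟨hg, hgS⟩
          calc |g x| ≤ m := Finset.le_sup' (fun e => |e x|) hgmem
          _ ≤ c := le_max_left _ _
        · push_neg at hgS
          exact le_trans hgS (le_max_right _ _)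
      have := le_trans (le_abs_self (g x)) hgle
      linarith
  obtain ⟨e0, he0E, he0⟩ := hFne
  have hFfin : {e ∈ EP | |e x| = 1}.Finite := by
    refine hfin.subset ?_
    rintro e ⟨he, h1⟩
    exact ⟨he, by rw [h1]; linarith⟩
  set Fs := hFfin.toFinset with hFs
  set σ : (X →L[ℝ] ℝ) → (X →L[ℝ] ℝ) := fun e => if 0 ≤ e x then e else -e with hσ
  set G := Fs.image σ with hG
  have hGne : G.Nonempty :=
    ⟨σ e0, Finset.mem_image_of_mem _ (hFfin.mem_toFinset.mpr ⟨he0E, he0⟩)⟩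
  have hGx : ∀ g ∈ G, g x = 1 := by
    intro g hg
    obtain ⟨e, he, rfl⟩ := Finset.mem_image.mp hg
    obtain ⟨heE, habs⟩ := hFfin.mem_toFinset.mp he
    rcases (abs_eq (by norm_num : (0:ℝ) ≤ 1)).mp habs with h1 | h1
    · have h0 : 0 ≤ e x := by rw [h1]; norm_num
      simp only [hσ, if_pos h0]; exact h1
    · have h0 : ¬ (0 ≤ e x) := by rw [h1]; norm_num
      simp only [hσ, if_neg h0, ContinuousLinearMap.neg_apply, h1, neg_neg]
  have hGnorm : ∀ g ∈ G, ‖g‖ ≤ 1 := by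
    intro g hg
    obtain ⟨e, he, rfl⟩ := Finset.mem_image.mp hg
    obtain ⟨heE, _⟩ := hFfin.mem_toFinset.mp he
    by_cases h0 : 0 ≤ e x
    · simp only [hσ, if_pos h0]; exact hEnorm e heE
    · simp only [hσ, if_neg h0, norm_neg]; exact hEnorm e heE
  have hGpos : ∀ g ∈ EP, g x = 1 → g ∈ G := by
    intro g hg h1
    have hgF : g ∈ Fs := hFfin.mem_toFinset.mpr ⟨hg, by rw [h1]; norm_num⟩
    have hσg : σ g = g := by simp only [hσ]; rw [if_pos (by rw [h1]; norm_num)]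
    exact hσg ▸ Finset.mem_image_of_mem σ hgF
  have hGneg : ∀ g ∈ EP, g x = -1 → -g ∈ G := by
    intro g hg h1
    have hgF : g ∈ Fs := hFfin.mem_toFinset.mpr ⟨hg, by rw [h1]; norm_num⟩
    have hσg : σ g = -g := by simp only [hσ]; rw [if_neg (by rw [h1]; norm_num)]
    exact hσg ▸ Finset.mem_image_of_mem σ hgF
  set n := G.card with hn
  have hnpos : 0 < n := Finset.card_pos.mpr hGne
  have hnR : (0:ℝ) < (n:ℝ) := by exact_mod_cast hnpos
  have hnne : (n:ℝ) ≠ 0 := ne_of_gt hnR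
  clear_value n G σ Fs
  have happly : ∀ (g : X →L[ℝ] ℝ), ‖g‖ ≤ 1 → ∀ y : X, ‖y‖ ≤ 1 → |g y| ≤ 1 := by
    intro g hgn y hy
    calc |g y| = ‖g y‖ := (Real.norm_eq_abs _).symm
    _ ≤ ‖g‖ * ‖y‖ := g.le_opNorm y
    _ ≤ 1 * 1 := mul_le_mul hgn hy (norm_nonneg _) zero_le_one
    _ = 1 := one_mul 1
  set f : X →L[ℝ] ℝ := (n : ℝ)⁻¹ • ∑ g ∈ G, g with hf
  have hfapp : ∀ y : X, f y = (n:ℝ)⁻¹ * ∑ g ∈ G, g y := by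
    intro y
    rw [hf, ContinuousLinearMap.smul_apply, ContinuousLinearMap.sum_apply, smul_eq_mul]
  have hfx : f x = 1 := by
    rw [hfapp, Finset.sum_congr rfl hGx, Finset.sum_const, nsmul_eq_mul, mul_one, ← hn]
    exact inv_mul_cancel₀ hnne
  have hfnorm : ‖f‖ = 1 := by
    refine le_antisymm ?_ ?_
    · refine f.opNorm_le_bound zero_le_one (fun y => ?_)
      rw [one_mul, hfapp, Real.norm_eq_abs]
      have hb : ∀ g ∈ G, |g y| ≤ ‖y‖ := by
        intro g hg
        calc |g y| = ‖g y‖ := (Real.norm_eq_abs _).symm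
        _ ≤ ‖g‖ * ‖y‖ := g.le_opNorm y
        _ ≤ 1 * ‖y‖ := mul_le_mul_of_nonneg_right (hGnorm g hg) (norm_nonneg _)
        _ = ‖y‖ := one_mul _
      calc |(n:ℝ)⁻¹ * ∑ g ∈ G, g y| = (n:ℝ)⁻¹ * |∑ g ∈ G, g y| := by
            rw [abs_mul, abs_of_nonneg (by positivity)]
      _ ≤ (n:ℝ)⁻¹ * ∑ g ∈ G, |g y| :=
            mul_le_mul_of_nonneg_left (Finset.abs_sum_le_sum_abs _ _) (by positivity)
      _ ≤ (n:ℝ)⁻¹ * ∑ _g ∈ G, ‖y‖ :=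
            mul_le_mul_of_nonneg_left (Finset.sum_le_sum hb) (by positivity)
      _ = (n:ℝ)⁻¹ * ((n:ℝ) * ‖y‖) := by
            rw [Finset.sum_const, nsmul_eq_mul, ← hn]
      _ = ‖y‖ := by rw [← mul_assoc, inv_mul_cancel₀ hnne, one_mul]
    · have h1 : (1:ℝ) = |f x| := by rw [hfx]; norm_num
      rw [h1]
      calc |f x| = ‖f x‖ := (Real.norm_eq_abs _).symm
      _ ≤ ‖f‖ * ‖x‖ := f.le_opNorm x
      _ = ‖f‖ := by rw [hx, mul_one]
  set δ : ℝ := 1 / (2 * n) with hδdef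
  have hδ : 0 < δ := by rw [hδdef]; positivity
  have hnδ : (n:ℝ) * δ = 1/2 := by rw [hδdef]; field_simp
  have hxslice : x ∈ unitBallSlice f δ := ⟨hx.le, by rw [hfx]; linarith⟩
  -- every g ∈ G is large on the slice
  have hkey : ∀ y ∈ unitBallSlice f δ, ∀ g ∈ G, 1/2 < g y := by
    rintro y ⟨hy1, hy2⟩ g hg
    have hsum : (n:ℝ) * (1 - δ) < ∑ g' ∈ G, g' y := by
      have h1 : (n:ℝ) * (1 - δ) < (n:ℝ) * f y := mul_lt_mul_of_pos_left hy2 hnR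
      have h2 : (n:ℝ) * f y = ∑ g' ∈ G, g' y := by
        rw [hfapp, ← mul_assoc, mul_inv_cancel₀ hnne, one_mul]
      linarith
    have herase : ∑ g' ∈ G.erase g, g' y ≤ ((n:ℝ) - 1) := by
      have h1 : ∑ g' ∈ G.erase g, g' y ≤ ∑ _g' ∈ G.erase g, (1:ℝ) := by
        refine Finset.sum_le_sum (fun g' hg' => ?_)
        have := happly g' (hGnorm g' (Finset.mem_of_mem_erase hg')) y hy1
        exact le_trans (le_abs_self _) this
      have h2 : ∑ _g' ∈ G.erase g, (1:ℝ) = ((G.erase g).card : ℝ) := by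
        rw [Finset.sum_const, nsmul_eq_mul, mul_one]
      have h3 : ((G.erase g).card : ℝ) = (n:ℝ) - 1 := by
        rw [Finset.card_erase_of_mem hg, ← hn, Nat.cast_sub hnpos, Nat.cast_one]
      linarith
    have hsplit : g y + ∑ g' ∈ G.erase g, g' y = ∑ g' ∈ G, g' y := by
      simpa using Finset.add_sum_erase G (fun g' : X →L[ℝ] ℝ => g' y) hg
    nlinarith
  -- distance bound on the slice
  have hbound : ∀ y ∈ unitBallSlice f δ, ‖x - y‖ ≤ 1 + M := by
    intro y hy
    rcases eq_or_ne x y with rfl | hne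
    · rw [sub_self, norm_zero]; linarith
    refine le_of_forall_pos_le_add ?_
    intro η hη
    obtain ⟨g, hgE, hgz⟩ := exists_extreme_norming (x - y) (sub_ne_zero.mpr hne) hη
    have hmap : g (x - y) = g x - g y := map_sub g x y
    have hgy : |g y| ≤ 1 := happly g (hEnorm g hgE) y hy.1
    have hfinal : g (x - y) ≤ 1 + M := by
      rcases lt_or_ge (|g x|) 1 with hlt | hge
      · have hMg := hMub g hgE hlt
        have h1 : g x ≤ |g x| := le_abs_self _
        have h2 : -(g y) ≤ |g y| := neg_le_abs _
        rw [hmap]; linarith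
      · have h1 : |g x| = 1 := le_antisymm (hEabs g hgE) hge
        rcases (abs_eq (by norm_num : (0:ℝ) ≤ 1)).mp h1 with hgx1 | hgx1
        · have hgG : g ∈ G := hGpos g hgE hgx1
          have := hkey y hy g hgG
          rw [hmap, hgx1]; linarith
        · have hgG : -g ∈ G := hGneg g hgE hgx1
          have hny := hkey y hy (-g) hgG
          rw [ContinuousLinearMap.neg_apply] at hny
          have h2 : -(g y) ≤ |g y| := neg_le_abs _
          rw [hmap, hgx1]; linarith
    linarith
  -- conclude
  have hr : sSup ((fun y => ‖x - y‖) '' unitBallSlice f δ) ≤ 1 + M := by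
    refine Real.sSup_le ?_ (by linarith)
    rintro r ⟨y, hy, rfl⟩
    exact hbound y hy
  have hbddS : BddBelow {r | ∃ (f : X →L[ℝ] ℝ) (δ : ℝ), ‖f‖ = 1 ∧ 0 < δ ∧
      x ∈ unitBallSlice f δ ∧ r = sSup ((fun y => ‖x - y‖) '' unitBallSlice f δ)} := by
    refine ⟨0, ?_⟩
    rintro r ⟨f', δ', hf', hδ', hx', rfl⟩
    have himgbdd' : BddAbove ((fun y => ‖x - y‖) '' unitBallSlice f' δ') := by
      refine ⟨2, ?_⟩
      rintro r ⟨y, hy, rfl⟩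
      calc ‖x - y‖ ≤ ‖x‖ + ‖y‖ := norm_sub_le x y
      _ ≤ 1 + 1 := add_le_add hx.le hy.1
      _ = 2 := by norm_num
    have hmm : ‖x - x‖ ∈ (fun y => ‖x - y‖) '' unitBallSlice f' δ' := ⟨x, hx', rfl⟩
    have h0 := le_csSup himgbdd' hmm
    rw [sub_self, norm_zero] at h0
    exact h0
  have hmemS : sSup ((fun y => ‖x - y‖) '' unitBallSlice f δ) ∈
      {r | ∃ (f : X →L[ℝ] ℝ) (δ : ℝ), ‖f‖ = 1 ∧ 0 < δ ∧
        x ∈ unitBallSlice f δ ∧ r = sSup ((fun y => ‖x - y‖) '' unitBallSlice f δ)} :=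
    ⟨f, δ, hfnorm, hδ, hxslice, rfl⟩
  exact le_trans (csInf_le hbddS hmemS) hr
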